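/- arXiv:1901.03534 — 2 statements merged into one kernel-verified Lean document; each statement's English description precedes it below -/
import Mathlib

section
/- Let ϱ_T(ζ) = ζ/((1+Tζ²)·tanh(ζ)). For T>0, ϱ_T(ζ) is never a negative real number when Re(ζ) ≠ 0; in particular |arg(ϱ_T(ζ))| < π for Re(ζ) ≠ 0 away from poles/zeros. -/
noncomputable def rhoT (T : ℝ) (ζ : ℂ) : ℂ :=
  ζ * Complex.cosh ζ / ((1 + (T : ℂ) * ζ ^ 2) * Complex.sinh ζ)

lemma sinh_re' (z : ℂ) : (Complex.sinh z).re = Real.sinh z.re * Real.cos z.im := by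
  conv_lhs => rw [← Complex.re_add_im z]
  rw [Complex.sinh_add, Complex.sinh_mul_I, Complex.cosh_mul_I]
  simp [Complex.sinh_ofReal_re, Complex.cosh_ofReal_re, Complex.sinh_ofReal_im,
    Complex.cosh_ofReal_im, Complex.mul_re, Complex.mul_im,
    Complex.cos_ofReal_re, Complex.sin_ofReal_re]

lemma sinh_im' (z : ℂ) : (Complex.sinh z).im = Real.cosh z.re * Real.sin z.im := by
  conv_lhs => rw [← Complex.re_add_im z]
  rw [Complex.sinh_add, Complex.sinh_mul_I, Complex.cosh_mul_I]
  simp [Complex.sinh_ofReal_re, Complex.cosh_ofReal_re, Complex.sinh_ofReal_im,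
    Complex.cosh_ofReal_im, Complex.mul_re, Complex.mul_im,
    Complex.cos_ofReal_re, Complex.sin_ofReal_re]

lemma cosh_re' (z : ℂ) : (Complex.cosh z).re = Real.cosh z.re * Real.cos z.im := by
  conv_lhs => rw [← Complex.re_add_im z]
  rw [Complex.cosh_add, Complex.sinh_mul_I, Complex.cosh_mul_I]
  simp [Complex.sinh_ofReal_re, Complex.cosh_ofReal_re, Complex.sinh_ofReal_im,
    Complex.cosh_ofReal_im, Complex.mul_re, Complex.mul_im,
    Complex.cos_ofReal_re, Complex.sin_ofReal_re]

lemma cosh_im' (z : ℂ) : (Complex.cosh z).im = Real.sinh z.re * Real.sin z.im := by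
  conv_lhs => rw [← Complex.re_add_im z]
  rw [Complex.cosh_add, Complex.sinh_mul_I, Complex.cosh_mul_I]
  simp [Complex.sinh_ofReal_re, Complex.cosh_ofReal_re, Complex.sinh_ofReal_im,
    Complex.cosh_ofReal_im, Complex.mul_re, Complex.mul_im,
    Complex.cos_ofReal_re, Complex.sin_ofReal_re]

lemma mul_not_neg_real (a b : ℂ) (ha : 0 < a.re) (hb : 0 < b.re) :
    ¬ ((a * b).im = 0 ∧ (a * b).re < 0) := by
  rintro ⟨h1, h2⟩
  rw [Complex.mul_im] at h1
  rw [Complex.mul_re] at h2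
  have h3 : a.im * (a.re * b.im + a.im * b.re) = 0 := by rw [h1, mul_zero]
  have h4 := mul_lt_mul_of_pos_left h2 ha
  nlinarith [mul_pos (mul_pos ha ha) hb, mul_nonneg (sq_nonneg a.im) hb.le]

lemma re_pos_div (ζ : ℂ) (T : ℝ) (hT : 0 < T) (hx : 0 < ζ.re)
    (hd : (1 + (T : ℂ) * ζ ^ 2) ≠ 0) : 0 < (ζ / (1 + (T : ℂ) * ζ ^ 2)).re := by
  rw [Complex.div_re]
  have hns : 0 < Complex.normSq (1 + (T : ℂ) * ζ ^ 2) := Complex.normSq_pos.2 hd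
  rw [← add_div, lt_div_iff₀ hns]
  simp only [Complex.add_re, Complex.add_im, Complex.one_re, Complex.one_im,
    Complex.mul_re, Complex.mul_im, Complex.ofReal_re, Complex.ofReal_im,
    pow_two]
  ring_nf
  nlinarith [mul_nonneg (mul_nonneg hx.le hT.le) (sq_nonneg ζ.im),
    mul_pos (mul_pos (mul_pos hx hx) hx) hT]

lemma re_pos_coth (ζ : ℂ) (hx : 0 < ζ.re) (hs : Complex.sinh ζ ≠ 0) :
    0 < (Complex.cosh ζ / Complex.sinh ζ).re := by
  rw [Complex.div_re]
  have hns : 0 < Complex.normSq (Complex.sinh ζ) := Complex.normSq_pos.2 hs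
  rw [← add_div, lt_div_iff₀ hns]
  rw [sinh_re', sinh_im', cosh_re', cosh_im']
  have h1 : Real.sin ζ.im ^ 2 + Real.cos ζ.im ^ 2 = 1 := Real.sin_sq_add_cos_sq _
  have h2 : 0 < Real.sinh ζ.re := Real.sinh_pos_iff.2 hx
  have h3 : 0 < Real.cosh ζ.re := Real.cosh_pos _
  nlinarith [mul_pos h2 h3]

lemma rhoT_eq (T : ℝ) (ζ : ℂ) (hden : (1 + (T : ℂ) * ζ ^ 2) * Complex.sinh ζ ≠ 0) :
    rhoT T ζ = (ζ / (1 + (T : ℂ) * ζ ^ 2)) * (Complex.cosh ζ / Complex.sinh ζ) := by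
  have h1 : (1 + (T : ℂ) * ζ ^ 2) ≠ 0 := fun h => hden (by rw [h, zero_mul])
  have h2 : Complex.sinh ζ ≠ 0 := fun h => hden (by rw [h, mul_zero])
  rw [rhoT]
  field_simp

lemma rhoT_aux (T : ℝ) (hT : 0 < T) (ζ : ℂ) (hre : 0 < ζ.re)
    (hden : (1 + (T : ℂ) * ζ ^ 2) * Complex.sinh ζ ≠ 0) :
    ¬ ((rhoT T ζ).im = 0 ∧ (rhoT T ζ).re < 0) := by
  have h1 : (1 + (T : ℂ) * ζ ^ 2) ≠ 0 := fun h => hden (by rw [h, zero_mul])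
  have h2 : Complex.sinh ζ ≠ 0 := fun h => hden (by rw [h, mul_zero])
  rw [rhoT_eq T ζ hden]
  exact mul_not_neg_real _ _ (re_pos_div ζ T hT hre h1) (re_pos_coth ζ hre h2)

lemma rhoT_neg (T : ℝ) (ζ : ℂ) : rhoT T (-ζ) = rhoT T ζ := by
  simp only [rhoT, Complex.sinh_neg, Complex.cosh_neg, neg_sq]
  rw [neg_mul, mul_neg, neg_div_neg_eq]

/-- ϱ_T(ζ) is never a negative real number when Re ζ ≠ 0 (away from zeros of the
denominator). -/
theorem rhoT_not_neg_real (T : ℝ) (hT : 0 < T) (ζ : ℂ) (hre : ζ.re ≠ 0)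
    (hden : (1 + (T : ℂ) * ζ ^ 2) * Complex.sinh ζ ≠ 0) :
    ¬ ((rhoT T ζ).im = 0 ∧ (rhoT T ζ).re < 0) := by
  rcases lt_or_gt_of_ne hre with h | h
  · have hden' : (1 + (T : ℂ) * (-ζ) ^ 2) * Complex.sinh (-ζ) ≠ 0 := by
      rw [neg_pow, Complex.sinh_neg]
      simpa [mul_neg] using neg_ne_zero.2 hden
    have := rhoT_aux T hT (-ζ) (by simpa using neg_pos.2 h) hden'
    rwa [rhoT_neg] at this
  · exact rhoT_aux T hT ζ h hden
end

section
/- The function f(x) = (1+ax²)/(1+bx²) on ℝ is positive definite if and only if b ≥ a ≥ 0. -/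
open MeasureTheory Real Set Filter Topology


lemma integrableOn_exp_cos (w : ℝ) :
    IntegrableOn (fun s => Real.exp (-s) * Real.cos (w * s)) (Ioi (0:ℝ)) := by
  apply Integrable.mono (g := fun s => Real.exp (-1 * s)) (by simpa [IntegrableOn] using exp_neg_integrableOn_Ioi 0 one_pos)
  · apply Measurable.aestronglyMeasurable
    fun_prop
  · filter_upwards with s
    simp only [neg_one_mul, norm_mul, Real.norm_eq_abs, Real.abs_exp]
    nlinarith [abs_cos_le_one (w*s), Real.exp_pos (-s), abs_nonneg (Real.cos (w*s)),
      Real.abs_exp (-s)]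

lemma integral_exp_cos (w : ℝ) :
    ∫ s in Ioi (0:ℝ), Real.exp (-s) * Real.cos (w * s) = 1 / (1 + w ^ 2) := by
  have hpos : (0:ℝ) < 1 + w ^ 2 := by positivity
  set F : ℝ → ℝ := fun s => Real.exp (-s) * (w * Real.sin (w * s) - Real.cos (w * s)) with hF
  have hderiv : ∀ s ∈ Ici (0:ℝ), HasDerivAt F ((1 + w ^ 2) * (Real.exp (-s) * Real.cos (w * s))) s := by
    intro s _
    have h1 : HasDerivAt (fun s : ℝ => Real.exp (-s)) (-Real.exp (-s)) s := by
      simpa using ((hasDerivAt_id s).neg.exp)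
    have h2 : HasDerivAt (fun s : ℝ => w * Real.sin (w * s) - Real.cos (w * s))
        (w * (Real.cos (w * s) * w) + Real.sin (w * s) * w) s := by
      have hws : HasDerivAt (fun s : ℝ => w * s) w s := by
        simpa using (hasDerivAt_id s).const_mul w
      exact ((hws.sin.const_mul w).sub hws.cos).congr_deriv (by ring)
    have := h1.mul h2
    exact this.congr_deriv (by ring)
  have hlim : Tendsto F atTop (𝓝 0) := by
    have hb : ∀ s, |F s| ≤ (|w| + 1) * Real.exp (-s) := by
      intro s
      rw [hF]
      simp only [abs_mul, Real.abs_exp]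
      rw [mul_comm]
      apply mul_le_mul_of_nonneg_right _ (Real.exp_pos _).le
      calc |w * Real.sin (w*s) - Real.cos (w*s)| ≤ |w * Real.sin (w*s)| + |Real.cos (w*s)| := abs_sub _ _
        _ ≤ |w| + 1 := by
            rw [abs_mul]
            have := abs_sin_le_one (w*s); have := abs_cos_le_one (w*s)
            nlinarith [abs_nonneg w]
    have h0 : Tendsto (fun s => (|w| + 1) * Real.exp (-s)) atTop (𝓝 0) := by
      simpa using (tendsto_exp_neg_atTop_nhds_zero.const_mul (|w|+1))
    exact squeeze_zero_norm (fun s => by simpa using hb s) h0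
  have hint : IntegrableOn (fun s => (1 + w ^ 2) * (Real.exp (-s) * Real.cos (w * s))) (Ioi (0:ℝ)) :=
    (integrableOn_exp_cos w).const_mul _
  have := integral_Ioi_of_hasDerivAt_of_tendsto' hderiv hint hlim
  rw [MeasureTheory.integral_const_mul] at this
  have hF0 : F 0 = -1 := by simp [hF]
  rw [hF0] at this
  rw [eq_div_iff hpos.ne']
  linarith [this]

private lemma sum_kernel_nonneg' (n : ℕ) (ξ c : Fin n → ℝ) :
    0 ≤ ∑ i, ∑ j, c i * c j * (1 / (1 + (ξ i - ξ j) ^ 2)) := by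
  have key : ∑ i, ∑ j, c i * c j * (1 / (1 + (ξ i - ξ j) ^ 2))
      = ∫ s in Ioi (0:ℝ), ∑ i, ∑ j, c i * c j * (Real.exp (-s) * Real.cos ((ξ i - ξ j) * s)) := by
    rw [MeasureTheory.integral_finset_sum _ (fun i _ =>
      MeasureTheory.integrable_finset_sum _ (fun j _ =>
        (integrableOn_exp_cos (ξ i - ξ j)).const_mul _))]
    apply Finset.sum_congr rfl; intro i _
    rw [MeasureTheory.integral_finset_sum _ (fun j _ =>
        (integrableOn_exp_cos (ξ i - ξ j)).const_mul _)]
    apply Finset.sum_congr rfl; intro j _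
    rw [MeasureTheory.integral_const_mul, integral_exp_cos]
  rw [key]
  apply MeasureTheory.setIntegral_nonneg measurableSet_Ioi
  intro s _
  have expand : ∑ i, ∑ j, c i * c j * (Real.exp (-s) * Real.cos ((ξ i - ξ j) * s))
      = Real.exp (-s) * ((∑ i, c i * Real.cos (ξ i * s)) ^ 2 + (∑ i, c i * Real.sin (ξ i * s)) ^ 2) := by
    rw [sq, sq, Finset.sum_mul_sum, Finset.sum_mul_sum, mul_add, Finset.mul_sum, Finset.mul_sum,
      ← Finset.sum_add_distrib]
    apply Finset.sum_congr rfl; intro i _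
    rw [Finset.mul_sum, Finset.mul_sum, ← Finset.sum_add_distrib]
    apply Finset.sum_congr rfl; intro j _
    rw [sub_mul, Real.cos_sub]
    ring
  rw [expand]
  positivity

open Finset in
/-- A real function f is positive definite if all matrices [f(ξᵢ−ξⱼ)] are positive
semidefinite, equivalently all real quadratic forms are nonnegative. -/
def IsPosDefRealFn (f : ℝ → ℝ) : Prop :=
  ∀ (n : ℕ) (ξ : Fin n → ℝ) (c : Fin n → ℝ),
    0 ≤ ∑ i, ∑ j, c i * c j * f (ξ i - ξ j)

private lemma fwd_le (a b : ℝ) (hb : 0 < b)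
    (h : IsPosDefRealFn (fun x => (1 + a * x ^ 2) / (1 + b * x ^ 2))) : a ≤ b := by
  have h2 := h 2 ![0, 1] ![1, -1]
  simp [Fin.sum_univ_two] at h2
  have hb1 : (0:ℝ) < 1 + b := by linarith
  have hq : (1 + a) / (1 + b) ≤ 1 := by linarith
  rw [div_le_one hb1] at hq
  linarith


private lemma fwd_nonneg (a b : ℝ) (hb : 0 < b)
    (h : IsPosDefRealFn (fun x => (1 + a * x ^ 2) / (1 + b * x ^ 2))) : 0 ≤ a := by
  by_contra ha
  push_neg at ha
  set n : ℕ := ⌈2 * b / (-a)⌉₊ + 2 with hn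
  have hn2 : 2 ≤ n := by omega
  have hnr : (2:ℝ) ≤ (n:ℝ) := by exact_mod_cast hn2
  have hna' : (0:ℝ) < -a := by linarith
  have hna : 2 * b ≤ ((n:ℝ) - 1) * (-a) := by
    have h1 : 2 * b / (-a) ≤ (⌈2 * b / (-a)⌉₊ : ℝ) := Nat.le_ceil _
    have h2 : ((⌈2 * b / (-a)⌉₊ : ℝ)) ≤ (n:ℝ) - 1 := by
      rw [hn]; push_cast; linarith
    calc 2 * b = (2 * b / (-a)) * (-a) := by rw [div_mul_cancel₀ _ hna'.ne']
      _ ≤ ((n:ℝ) - 1) * (-a) := mul_le_mul_of_nonneg_right (le_trans h1 h2) hna'.le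
  set T : ℝ := Real.sqrt (((n:ℝ) + 1) / b) with hT
  have hT2 : T ^ 2 = ((n:ℝ) + 1) / b := Real.sq_sqrt (by positivity)
  have hbT2 : b * T ^ 2 = (n:ℝ) + 1 := by rw [hT2]; field_simp
  set f1 : ℝ := (1 + a * T ^ 2) / (1 + b * T ^ 2) with hf1
  have hS := h n (fun i => (i : ℝ) * T) (fun _ => 1)
  simp only [one_mul] at hS
  have hbound : ∀ i j : Fin n,
      ((1 + a * ((i:ℝ) * T - (j:ℝ) * T) ^ 2) / (1 + b * ((i:ℝ) * T - (j:ℝ) * T) ^ 2))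
        ≤ if i = j then 1 else f1 := by
    intro i j
    rcases eq_or_ne i j with rfl | hij
    · simp
    · simp only [if_neg hij]
      set x : ℝ := (i:ℝ) * T - (j:ℝ) * T with hx
      have hne : (i:ℕ) ≠ (j:ℕ) := fun hc => hij (Fin.ext hc)
      have h1 : (1:ℝ) ≤ |(i:ℝ) - (j:ℝ)| := by
        rcases lt_or_gt_of_ne hne with hlt | hgt
        · have h1' : ((i:ℕ):ℝ) + 1 ≤ ((j:ℕ):ℝ) := by exact_mod_cast hlt
          calc (1:ℝ) ≤ -(((i:ℕ):ℝ) - ((j:ℕ):ℝ)) := by linarith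
            _ ≤ |((i:ℕ):ℝ) - ((j:ℕ):ℝ)| := neg_le_abs _
        · have h1' : ((j:ℕ):ℝ) + 1 ≤ ((i:ℕ):ℝ) := by exact_mod_cast hgt
          calc (1:ℝ) ≤ ((i:ℕ):ℝ) - ((j:ℕ):ℝ) := by linarith
            _ ≤ |((i:ℕ):ℝ) - ((j:ℕ):ℝ)| := le_abs_self _
      have hsq1 : (1:ℝ) ≤ ((i:ℝ) - (j:ℝ)) ^ 2 := by nlinarith [sq_abs ((i:ℝ) - (j:ℝ))]
      have hxT : T ^ 2 ≤ x ^ 2 := by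
        have hxeq : x = ((i:ℝ) - (j:ℝ)) * T := by rw [hx]; ring
        rw [hxeq, mul_pow]
        nlinarith [mul_nonneg (by linarith : (0:ℝ) ≤ ((i:ℝ)-(j:ℝ))^2 - 1) (sq_nonneg T)]
      have hd1 : (0:ℝ) < 1 + b * x ^ 2 := by positivity
      have hd2 : (0:ℝ) < 1 + b * T ^ 2 := by positivity
      rw [hf1, div_le_div_iff₀ hd1 hd2]
      nlinarith
  have hsum : ∑ i : Fin n, ∑ j : Fin n,
      ((1 + a * ((i:ℝ) * T - (j:ℝ) * T) ^ 2) / (1 + b * ((i:ℝ) * T - (j:ℝ) * T) ^ 2))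
      ≤ (n:ℝ) + (n:ℝ) * ((n:ℝ) - 1) * f1 := by
    have hrow : ∀ i : Fin n, (∑ j : Fin n, if i = j then (1:ℝ) else f1) = 1 + ((n:ℝ)-1)*f1 := by
      intro i
      have hsplit : (∑ j : Fin n, if i = j then (1:ℝ) else f1)
          = ∑ j : Fin n, (f1 + (if i = j then 1 - f1 else 0)) := by
        apply Finset.sum_congr rfl; intro j _; by_cases hji : i = j <;> simp [hji]
      rw [hsplit, Finset.sum_add_distrib, Finset.sum_const, Finset.sum_ite_eq,
        if_pos (Finset.mem_univ i), Finset.card_univ, Fintype.card_fin, nsmul_eq_mul]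
      ring
    calc _ ≤ ∑ i : Fin n, ∑ j : Fin n, (if i = j then (1:ℝ) else f1) := by
            apply Finset.sum_le_sum; intro i _
            apply Finset.sum_le_sum; intro j _
            exact hbound i j
      _ = (n:ℝ) + (n:ℝ) * ((n:ℝ) - 1) * f1 := by
          rw [Finset.sum_congr rfl (fun i _ => hrow i), Finset.sum_const, Finset.card_univ,
            Fintype.card_fin, nsmul_eq_mul]
          ring
  have hf1neg : ((n:ℝ) - 1) * f1 < -1 := by
    have hd2 : (0:ℝ) < 1 + b * T ^ 2 := by positivity
    rw [hf1,
      show ((n:ℝ)-1) * ((1 + a * T^2)/(1 + b*T^2)) = (((n:ℝ)-1) * (1 + a * T^2))/(1 + b*T^2) by ring,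
      div_lt_iff₀ hd2]
    have haT : ((n:ℝ) - 1) * a * T ^ 2 ≤ -2 * b * T ^ 2 := by
      have : (0:ℝ) ≤ T ^ 2 := sq_nonneg T
      nlinarith
    nlinarith [hbT2]
  have hfin : (n:ℝ) + (n:ℝ) * ((n:ℝ) - 1) * f1 < 0 := by
    nlinarith [mul_lt_mul_of_pos_left hf1neg (show (0:ℝ) < (n:ℝ) by linarith)]
  linarith [hS, hsum, hfin]

private lemma rev_dir (a b : ℝ) (hb : 0 < b) (ha : 0 ≤ a) (hab : a ≤ b) :
    IsPosDefRealFn (fun x => (1 + a * x ^ 2) / (1 + b * x ^ 2)) := by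
  intro n ξ c
  have hb' : b ≠ 0 := hb.ne'
  have hsplit : ∀ x : ℝ, (1 + a * x ^ 2) / (1 + b * x ^ 2)
      = a / b + (b - a) / b * (1 / (1 + b * x ^ 2)) := by
    intro x
    have hx : (0:ℝ) < 1 + b * x ^ 2 := by positivity
    field_simp
    ring
  have hker : (0:ℝ) ≤ ∑ i, ∑ j, c i * c j * (1 / (1 + b * (ξ i - ξ j) ^ 2)) := by
    have := sum_kernel_nonneg' n (fun i => Real.sqrt b * ξ i) c
    have hrw : ∀ i j : Fin n,
        (1 : ℝ) + (Real.sqrt b * ξ i - Real.sqrt b * ξ j) ^ 2 = 1 + b * (ξ i - ξ j) ^ 2 := by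
      intro i j
      have : (Real.sqrt b * ξ i - Real.sqrt b * ξ j) ^ 2
          = Real.sqrt b ^ 2 * (ξ i - ξ j) ^ 2 := by ring
      rw [this, Real.sq_sqrt hb.le]
    calc (0:ℝ) ≤ ∑ i, ∑ j, c i * c j * (1 / (1 + (Real.sqrt b * ξ i - Real.sqrt b * ξ j) ^ 2)) := this
      _ = ∑ i, ∑ j, c i * c j * (1 / (1 + b * (ξ i - ξ j) ^ 2)) := by
          apply Finset.sum_congr rfl; intro i _
          apply Finset.sum_congr rfl; intro j _
          rw [hrw]
  have hconst : (0:ℝ) ≤ a / b * (∑ i, c i) ^ 2 := by positivity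
  have expand : ∑ i, ∑ j, c i * c j * ((1 + a * (ξ i - ξ j) ^ 2) / (1 + b * (ξ i - ξ j) ^ 2))
      = a / b * (∑ i, c i) ^ 2
        + (b - a) / b * ∑ i, ∑ j, c i * c j * (1 / (1 + b * (ξ i - ξ j) ^ 2)) := by
    rw [sq, Finset.sum_mul_sum, Finset.mul_sum, Finset.mul_sum, ← Finset.sum_add_distrib]
    apply Finset.sum_congr rfl; intro i _
    rw [Finset.mul_sum, Finset.mul_sum, ← Finset.sum_add_distrib]
    apply Finset.sum_congr rfl; intro j _
    rw [hsplit (ξ i - ξ j)]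
    ring
  simp only []
  rw [expand]
  have : (0:ℝ) ≤ (b - a) / b * ∑ i, ∑ j, c i * c j * (1 / (1 + b * (ξ i - ξ j) ^ 2)) := by
    apply mul_nonneg (div_nonneg (by linarith) hb.le) hker
  linarith

theorem posDef_rational_iff (a b : ℝ) (hb : 0 < b) :
    IsPosDefRealFn (fun x => (1 + a * x ^ 2) / (1 + b * x ^ 2)) ↔ (0 ≤ a ∧ a ≤ b) := by
  constructor
  · intro h
    exact ⟨fwd_nonneg a b hb h, fwd_le a b hb h⟩
  · rintro ⟨ha, hab⟩
    exact rev_dir a b hb ha hab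
end
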